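/- For every α₀ ∈ (1,2) there exists a constant C > 0, depending only on α₀, such that for every integer d ≥ 1 and every α ∈ [α₀, 2): c_{d,α}·S_d/(α−1) ≤ C·d·(2−α). -/

import Mathlib

open Real MeasureTheory

/-- The constant `c_{d,α} = α·2^(α−2)·Γ((d+α)/2) / (π^(d/2)·Γ((2−α)/2))`. -/
noncomputable def stableConst (d : ℕ) (α : ℝ) : ℝ :=
  α * (2 : ℝ) ^ (α - 2) * Real.Gamma ((d + α) / 2) /
    (Real.pi ^ ((d : ℝ) / 2) * Real.Gamma ((2 - α) / 2))

/-- The surface area `S_d = 2·π^(d/2)/Γ(d/2)` of the unit sphere in `ℝ^d`. -/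
noncomputable def sphereArea (d : ℕ) : ℝ :=
  2 * Real.pi ^ ((d : ℝ) / 2) / Real.Gamma ((d : ℝ) / 2)

lemma gamma_lb {y : ℝ} (h1 : 1 ≤ y) (h2 : y ≤ 3 / 2) :
    2 - Real.sqrt Real.pi ≤ Real.Gamma y := by
  have hsp : (1 : ℝ) ≤ Real.sqrt Real.pi := by
    rw [show (1:ℝ) = Real.sqrt 1 by simp]
    exact Real.sqrt_le_sqrt (by linarith [Real.pi_gt_three])
  rcases eq_or_lt_of_le h1 with h | h
  · rw [← h, Real.Gamma_one]; linarith
  · have key := Real.convexOn_Gamma.slope_mono_adjacent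
      (x := 1/2) (y := 1) (z := y)
      (by norm_num : (1/2 : ℝ) ∈ Set.Ioi (0:ℝ))
      (show y ∈ Set.Ioi (0:ℝ) by simp only [Set.mem_Ioi]; linarith)
      (by norm_num) h
    rw [Real.Gamma_one, Real.Gamma_one_half_eq] at key
    rw [div_le_div_iff₀ (by norm_num) (by linarith)] at key
    nlinarith [key]

lemma gamma_max {x t : ℝ} (hx : 0 < x) (ht0 : 0 ≤ t) (ht1 : t ≤ 1) :
    Real.Gamma (x + t) ≤ max (Real.Gamma x) (Real.Gamma (x + 1)) := by
  have hx1 : (0:ℝ) < x + 1 := by linarith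
  have h := Real.convexOn_log_Gamma.2 (Set.mem_Ioi.mpr hx) (Set.mem_Ioi.mpr hx1)
    (show (0:ℝ) ≤ 1 - t by linarith) ht0 (show (1 - t) + t = 1 by ring)
  have heq : (1 - t) • x + t • (x + 1) = x + t := by
    simp only [smul_eq_mul]; ring
  rw [heq] at h
  simp only [Function.comp_apply, smul_eq_mul] at h
  have hMpos : 0 < max (Real.Gamma x) (Real.Gamma (x + 1)) :=
    lt_max_of_lt_left (Real.Gamma_pos_of_pos hx)
  have hl1 : Real.log (Real.Gamma x) ≤ Real.log (max (Real.Gamma x) (Real.Gamma (x + 1))) :=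
    Real.log_le_log (Real.Gamma_pos_of_pos hx) (le_max_left _ _)
  have hl2 : Real.log (Real.Gamma (x + 1)) ≤ Real.log (max (Real.Gamma x) (Real.Gamma (x + 1))) :=
    Real.log_le_log (Real.Gamma_pos_of_pos hx1) (le_max_right _ _)
  have hlog : Real.log (Real.Gamma (x + t))
      ≤ Real.log (max (Real.Gamma x) (Real.Gamma (x + 1))) := by
    have e1 : (1 - t) * Real.log (Real.Gamma x)
        ≤ (1 - t) * Real.log (max (Real.Gamma x) (Real.Gamma (x + 1))) :=
      mul_le_mul_of_nonneg_left hl1 (by linarith)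
    have e2 : t * Real.log (Real.Gamma (x + 1))
        ≤ t * Real.log (max (Real.Gamma x) (Real.Gamma (x + 1))) :=
      mul_le_mul_of_nonneg_left hl2 ht0
    nlinarith [h]
  have hGpos : 0 < Real.Gamma (x + t) := Real.Gamma_pos_of_pos (by linarith)
  calc Real.Gamma (x + t) = Real.exp (Real.log (Real.Gamma (x + t))) :=
        (Real.exp_log hGpos).symm
    _ ≤ Real.exp (Real.log (max (Real.Gamma x) (Real.Gamma (x + 1)))) :=
        Real.exp_le_exp.mpr hlog
    _ = max (Real.Gamma x) (Real.Gamma (x + 1)) := Real.exp_log hMpos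

theorem stmt4 (α₀ : ℝ) (hα₀ : α₀ ∈ Set.Ioo (1 : ℝ) 2) :
    ∃ C > 0, ∀ (d : ℕ), 1 ≤ d → ∀ α ∈ Set.Ico α₀ 2,
      stableConst d α * sphereArea d / (α - 1) ≤ C * d * (2 - α) := by
  obtain ⟨ha1, ha2⟩ := hα₀
  have hsp2 : Real.sqrt Real.pi < 2 := by
    rw [show (2:ℝ) = Real.sqrt 4 by
      rw [show (4:ℝ) = 2^2 by norm_num]; exact (Real.sqrt_sq (by norm_num)).symm]
    exact Real.sqrt_lt_sqrt Real.pi_pos.le (by linarith [Real.pi_lt_d2])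
  have hsp0 : (0:ℝ) < 2 - Real.sqrt Real.pi := by linarith
  have ha0 : (0:ℝ) < α₀ - 1 := by linarith
  have hCpos : (0:ℝ) < 4 / ((2 - Real.sqrt Real.pi) * (α₀ - 1)) :=
    div_pos (by norm_num) (mul_pos hsp0 ha0)
  refine ⟨4 / ((2 - Real.sqrt Real.pi) * (α₀ - 1)), hCpos, ?_⟩
  intro d hd α hα
  obtain ⟨hα1, hα2⟩ := hα
  have hd1 : (1:ℝ) ≤ (d:ℝ) := by exact_mod_cast hd
  have hα1' : 1 < α := lt_of_lt_of_le ha1 hα1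
  have hx : 0 < (d:ℝ) / 2 := by linarith
  have hs : 0 < (2 - α) / 2 := by linarith
  have hGx : 0 < Real.Gamma ((d:ℝ) / 2) := Real.Gamma_pos_of_pos hx
  have hGs : 0 < Real.Gamma ((2 - α) / 2) := Real.Gamma_pos_of_pos hs
  have hGpos2 : 0 < Real.Gamma (((d:ℝ) + α) / 2) :=
    Real.Gamma_pos_of_pos (by linarith)
  -- bound on Γ((d+α)/2)
  have hR : Real.Gamma (((d:ℝ) + α) / 2) ≤ (d:ℝ) * Real.Gamma ((d:ℝ) / 2) := by
    have heq : ((d:ℝ) + α) / 2 = (d:ℝ) / 2 + α / 2 := by ring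
    rw [heq]
    refine le_trans (gamma_max hx (by linarith) (by linarith)) ?_
    rw [Real.Gamma_add_one hx.ne']
    apply max_le
    · nlinarith
    · nlinarith
  -- lower bound on Γ((2-α)/2)
  have hGsl : (2 - Real.sqrt Real.pi) / ((2 - α) / 2) ≤ Real.Gamma ((2 - α) / 2) := by
    have h1 : Real.Gamma ((2 - α) / 2 + 1) = (2 - α) / 2 * Real.Gamma ((2 - α) / 2) :=
      Real.Gamma_add_one hs.ne'
    have h2 : 2 - Real.sqrt Real.pi ≤ Real.Gamma ((2 - α) / 2 + 1) :=
      gamma_lb (by linarith) (by linarith)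
    rw [div_le_iff₀ hs]
    nlinarith
  -- rewrite the product
  have hπ : (0:ℝ) < Real.pi ^ ((d:ℝ) / 2) := Real.rpow_pos_of_pos Real.pi_pos _
  have h2p : (0:ℝ) < (2:ℝ) ^ (α - 1) := Real.rpow_pos_of_pos (by norm_num) _
  have hα1ne : α - 1 ≠ 0 := by intro h; linarith [sub_eq_zero.mp h]
  have hprod : stableConst d α * sphereArea d / (α - 1)
      = α * (2:ℝ) ^ (α - 1) * Real.Gamma (((d:ℝ) + α) / 2)
        / (Real.Gamma ((2 - α) / 2) * Real.Gamma ((d:ℝ) / 2) * (α - 1)) := by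
    have h2pow : (2:ℝ) ^ (α - 2) * 2 = (2:ℝ) ^ (α - 1) := by
      rw [show (α - 1) = (α - 2) + 1 by ring, Real.rpow_add (by norm_num), Real.rpow_one]
    unfold stableConst sphereArea
    rw [← h2pow]
    field_simp
  rw [hprod]
  have hrpow : (2:ℝ) ^ (α - 1) ≤ 2 := by
    calc (2:ℝ) ^ (α - 1) ≤ (2:ℝ) ^ (1:ℝ) :=
          Real.rpow_le_rpow_of_exponent_le one_le_two (by linarith)
      _ = 2 := Real.rpow_one 2
  have hnum : α * (2:ℝ) ^ (α - 1) * Real.Gamma (((d:ℝ) + α) / 2)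
      ≤ 2 * 2 * ((d:ℝ) * Real.Gamma ((d:ℝ) / 2)) := by
    have h1 : α * (2:ℝ) ^ (α - 1) ≤ 2 * 2 :=
      mul_le_mul (by linarith) hrpow h2p.le (by norm_num)
    exact mul_le_mul h1 hR hGpos2.le (by norm_num)
  have hden : (2 - Real.sqrt Real.pi) / ((2 - α) / 2) * Real.Gamma ((d:ℝ) / 2) * (α₀ - 1)
      ≤ Real.Gamma ((2 - α) / 2) * Real.Gamma ((d:ℝ) / 2) * (α - 1) := by
    have e1 : (2 - Real.sqrt Real.pi) / ((2 - α) / 2) * Real.Gamma ((d:ℝ) / 2)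
        ≤ Real.Gamma ((2 - α) / 2) * Real.Gamma ((d:ℝ) / 2) :=
      mul_le_mul_of_nonneg_right hGsl hGx.le
    have e2 : (0:ℝ) ≤ (2 - Real.sqrt Real.pi) / ((2 - α) / 2) * Real.Gamma ((d:ℝ) / 2) := by
      have := div_pos hsp0 hs
      nlinarith
    exact mul_le_mul e1 (show α₀ - 1 ≤ α - 1 by linarith) ha0.le
      (mul_nonneg hGs.le hGx.le)
  have hdenpos : (0:ℝ) < (2 - Real.sqrt Real.pi) / ((2 - α) / 2)
      * Real.Gamma ((d:ℝ) / 2) * (α₀ - 1) :=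
    mul_pos (mul_pos (div_pos hsp0 hs) hGx) ha0
  calc α * (2:ℝ) ^ (α - 1) * Real.Gamma (((d:ℝ) + α) / 2)
        / (Real.Gamma ((2 - α) / 2) * Real.Gamma ((d:ℝ) / 2) * (α - 1))
      ≤ 2 * 2 * ((d:ℝ) * Real.Gamma ((d:ℝ) / 2))
        / ((2 - Real.sqrt Real.pi) / ((2 - α) / 2) * Real.Gamma ((d:ℝ) / 2) * (α₀ - 1)) :=
        div_le_div₀ (by positivity) hnum hdenpos hden
    _ = 4 / ((2 - Real.sqrt Real.pi) * (α₀ - 1)) * (d:ℝ) * ((2 - α) / 2) := by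
        field_simp
        ring
    _ ≤ 4 / ((2 - Real.sqrt Real.pi) * (α₀ - 1)) * (d:ℝ) * (2 - α) := by
        have h0 : (0:ℝ) ≤ 4 / ((2 - Real.sqrt Real.pi) * (α₀ - 1)) * (d:ℝ) := by positivity
        nlinarith
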